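/- Let (Λ, μ) be a probability space and let A : S² × Λ → {-1, 1} and B : S² × Λ → {-1, 1} be functions such that A(a, ·) and B(b, ·) are measurable for all a, b. Define E(a, b) = ∫_Λ A(a, λ) B(b, λ) dμ(λ). Then for all a₁, a₂, b₁, b₂ ∈ S², one has -2 ≤ E(a₁, b₁) + E(a₁, b₂) + E(a₂, b₁) - E(a₂, b₂) ≤ 2 (the CHSH inequality for local hidden variable models). -/
import Mathlib


open MeasureTheory Metric
open scoped RealInnerProductSpace

/-- The unit sphere in ℝ³. -/
noncomputable abbrev Sphere2 := Metric.sphere (0 : EuclideanSpace ℝ (Fin 3)) 1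

/-- **CHSH inequality for local hidden variable models.**
Given a probability space `(Λ, μ)` and output functions `A, B : S² × Λ → {-1, 1}`
(measurable in the hidden variable), the correlations
`E(a, b) = ∫ A(a, λ) B(b, λ) dμ(λ)` satisfy the CHSH inequality. -/
theorem chsh_inequality_for_lhv
    {Λ : Type*} [MeasurableSpace Λ] (μ : Measure Λ) [IsProbabilityMeasure μ]
    (A B : Sphere2 → Λ → ℝ)
    (hA : ∀ a l, A a l = 1 ∨ A a l = -1)
    (hB : ∀ b l, B b l = 1 ∨ B b l = -1)
    (hAmeas : ∀ a, Measurable (A a))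
    (hBmeas : ∀ b, Measurable (B b))
    (E : Sphere2 → Sphere2 → ℝ)
    (hE : ∀ a b, E a b = ∫ l, A a l * B b l ∂μ) :
    ∀ a₁ a₂ b₁ b₂ : Sphere2,
      -2 ≤ E a₁ b₁ + E a₁ b₂ + E a₂ b₁ - E a₂ b₂ ∧
      E a₁ b₁ + E a₁ b₂ + E a₂ b₁ - E a₂ b₂ ≤ 2 := by
  intro a₁ a₂ b₁ b₂
  have hint : ∀ a b, Integrable (fun l => A a l * B b l) μ := by
    intro a b
    refine Integrable.mono' (integrable_const (1 : ℝ))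
      ((hAmeas a).mul (hBmeas b)).aestronglyMeasurable
      (ae_of_all _ fun l => ?_)
    rcases hA a l with h1 | h1 <;> rcases hB b l with h2 | h2 <;>
      simp [h1, h2, abs_mul]
  have key : E a₁ b₁ + E a₁ b₂ + E a₂ b₁ - E a₂ b₂ =
      ∫ l, (A a₁ l * B b₁ l + A a₁ l * B b₂ l + A a₂ l * B b₁ l - A a₂ l * B b₂ l) ∂μ := by
    have h12 : Integrable (fun l => A a₁ l * B b₁ l + A a₁ l * B b₂ l) μ :=
      (hint a₁ b₁).add (hint a₁ b₂)
    have h123 : Integrable (fun l => A a₁ l * B b₁ l + A a₁ l * B b₂ l + A a₂ l * B b₁ l) μ :=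
      h12.add (hint a₂ b₁)
    rw [hE, hE, hE, hE, ← integral_add (hint a₁ b₁) (hint a₁ b₂),
      ← integral_add h12 (hint a₂ b₁), ← integral_sub h123 (hint a₂ b₂)]
  have hptwise : ∀ l, |A a₁ l * B b₁ l + A a₁ l * B b₂ l + A a₂ l * B b₁ l - A a₂ l * B b₂ l| ≤ 2 := by
    intro l
    rcases hA a₁ l with h1 | h1 <;> rcases hA a₂ l with h2 | h2 <;>
      rcases hB b₁ l with h3 | h3 <;> rcases hB b₂ l with h4 | h4 <;>
      simp [h1, h2, h3, h4] <;> norm_num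
  have hintF : Integrable (fun l => A a₁ l * B b₁ l + A a₁ l * B b₂ l + A a₂ l * B b₁ l - A a₂ l * B b₂ l) μ :=
    (((hint a₁ b₁).add (hint a₁ b₂)).add (hint a₂ b₁)).sub (hint a₂ b₂)
  have habs : |E a₁ b₁ + E a₁ b₂ + E a₂ b₁ - E a₂ b₂| ≤ 2 := by
    rw [key]
    calc |∫ l, (A a₁ l * B b₁ l + A a₁ l * B b₂ l + A a₂ l * B b₁ l - A a₂ l * B b₂ l) ∂μ|
        ≤ ∫ l, |A a₁ l * B b₁ l + A a₁ l * B b₂ l + A a₂ l * B b₁ l - A a₂ l * B b₂ l| ∂μ :=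
          (Real.norm_eq_abs _ ▸ (norm_integral_le_integral_norm _).trans_eq
            (by simp_rw [Real.norm_eq_abs]))
      _ ≤ ∫ _l, (2 : ℝ) ∂μ :=
          integral_mono_of_nonneg (ae_of_all _ fun l => abs_nonneg _)
            (integrable_const 2) (ae_of_all _ hptwise)
      _ = 2 := by simp
  constructor
  · linarith [abs_le.mp habs |>.1]
  · exact abs_le.mp habs |>.2
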